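/- Let K, L be n×n real matrices with I the n×n identity. For i = 0,…,r let eᵢ : ℝ → ℝⁿ be differentiable and Fᵢ : ℝ → Matrix (Fin n) (Fin m) ℝ be a function of time, and let Δ : ℝ → ℝᵐ be differentiable. Suppose for all t: ėᵢ(t) = −K·eᵢ(t) + Fᵢ(t)·Δ(t) for every i, and Δ̇(t) = −Σ_{i=0}^{r} Fᵢ(t)ᵀ·[(L·K + I)·eᵢ(t) + L·ėᵢ(t)]. Then V(t) = ½ Σ_{i=0}^{r} ‖eᵢ(t)‖² + ½‖Δ(t)‖² is differentiable with V̇(t) = −Σ_{i=0}^{r} ⟨eᵢ(t), K·eᵢ(t)⟩ − ⟨Δ(t), G*(t)·Δ(t)⟩, where G*(t) = Σ_{i=0}^{r} Fᵢ(t)ᵀ·Lᵀ·Fᵢ(t). -/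

import Mathlib

open Matrix
open scoped InnerProductSpace


theorem inner_eq_dot {N : ℕ} (x y : EuclideanSpace ℝ (Fin N)) :
    ⟪x, y⟫_ℝ = x ⬝ᵥ y := by
  simp [PiLp.inner_apply, RCLike.inner_apply, dotProduct]
  exact Finset.sum_congr rfl fun _ _ => mul_comm _ _

theorem dot_sum_aux {N r : ℕ} (v : Fin N → ℝ) (w : Fin (r+1) → Fin N → ℝ) :
    v ⬝ᵥ (∑ i : Fin (r+1), w i) = ∑ i : Fin (r+1), v ⬝ᵥ w i := by
  simp [dotProduct, Finset.sum_apply, Finset.mul_sum]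
  rw [Finset.sum_comm]

theorem sum_mulVec_aux {n m r : ℕ} (M : Fin (r+1) → Matrix (Fin m) (Fin n) ℝ) (v : Fin n → ℝ) :
    (∑ i : Fin (r+1), M i).mulVec v = ∑ i : Fin (r+1), (M i).mulVec v := by
  ext j
  simp [mulVec, dotProduct, Matrix.sum_apply, Finset.sum_mul, Finset.sum_apply]
  rw [Finset.sum_comm]

/-- Under the augmented error dynamics `ėᵢ = -K eᵢ + Fᵢ(t) Δ` and the
augmented adaptation law `Δ̇ = -Σᵢ Fᵢ(t)ᵀ[(LK + I) eᵢ + L ėᵢ]`, the Lyapunov function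
`V(t) = ½ Σᵢ ‖eᵢ(t)‖² + ½‖Δ(t)‖²` is differentiable with
`V̇(t) = -Σᵢ ⟪eᵢ, K eᵢ⟫ - ⟪Δ, G*(t) Δ⟫`, where `G*(t) = Σᵢ Fᵢ(t)ᵀ Lᵀ Fᵢ(t)`. -/
theorem augmented_lyapunov_derivative {n m r : ℕ}
    (K L : Matrix (Fin n) (Fin n) ℝ)
    (F : Fin (r + 1) → ℝ → Matrix (Fin n) (Fin m) ℝ)
    (e e' : Fin (r + 1) → ℝ → EuclideanSpace ℝ (Fin n))
    (Δ Δ' : ℝ → EuclideanSpace ℝ (Fin m))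
    (he : ∀ i t, HasDerivAt (e i) (e' i t) t)
    (hΔ : ∀ t, HasDerivAt Δ (Δ' t) t)
    (hode : ∀ i t, e' i t = -(K.mulVec (e i t)) + (F i t).mulVec (Δ t))
    (hadapt : ∀ t, Δ' t =
      -(∑ i : Fin (r + 1),
        (F i t)ᵀ.mulVec ((L * K + 1).mulVec (e i t) + L.mulVec (e' i t)))) :
    ∀ t, HasDerivAt
      (fun s => (1 / 2 : ℝ) * ∑ i : Fin (r + 1), ‖e i s‖ ^ 2 +
        (1 / 2 : ℝ) * ‖Δ s‖ ^ 2)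
      (-(∑ i : Fin (r + 1), ⟪e i t, WithLp.toLp 2 (K.mulVec (e i t))⟫_ℝ) -
        ⟪Δ t, WithLp.toLp 2 ((∑ i : Fin (r + 1), (F i t)ᵀ * Lᵀ * F i t).mulVec (Δ t))⟫_ℝ) t := by
  intro t
  have h1 : ∀ i : Fin (r+1), HasDerivAt (fun s => ‖e i s‖ ^ 2)
      (⟪e i t, e' i t⟫_ℝ + ⟪e' i t, e i t⟫_ℝ) t := fun i => by
    simpa only [real_inner_self_eq_norm_sq] using (he i t).inner ℝ (he i t)
  have h2 : HasDerivAt (fun s => ‖Δ s‖ ^ 2) (⟪Δ t, Δ' t⟫_ℝ + ⟪Δ' t, Δ t⟫_ℝ) t := by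
    simpa only [real_inner_self_eq_norm_sq] using (hΔ t).inner ℝ (hΔ t)
  have hsum : HasDerivAt (fun s => ∑ i : Fin (r+1), ‖e i s‖ ^ 2)
      (∑ i : Fin (r+1), (⟪e i t, e' i t⟫_ℝ + ⟪e' i t, e i t⟫_ℝ)) t :=
    HasDerivAt.fun_sum fun i _ => h1 i
  have hV := (hsum.const_mul ((1:ℝ)/2)).add (h2.const_mul ((1:ℝ)/2))
  refine HasDerivAt.congr_deriv hV (Eq.symm ?_)
  -- restate dynamics in the plain Pi world
  have hode' : ∀ i : Fin (r+1),
      (e' i t : Fin n → ℝ) = -(K.mulVec (e i t)) + (F i t).mulVec (Δ t) :=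
    fun i => hode i t
  have hadapt' : (Δ' t : Fin m → ℝ) =
      -(∑ i : Fin (r + 1),
        (F i t)ᵀ.mulVec ((L * K + 1).mulVec (e i t) + L.mulVec (e' i t))) := hadapt t
  simp only [inner_eq_dot, WithLp.ofLp_toLp]
  have hterm : ∀ i : Fin (r+1),
      (e i t : Fin n → ℝ) ⬝ᵥ (e' i t : Fin n → ℝ)
        = -((e i t : Fin n → ℝ) ⬝ᵥ K.mulVec (e i t))
          + (e i t : Fin n → ℝ) ⬝ᵥ (F i t).mulVec (Δ t) := fun i => by
    rw [hode' i, dotProduct_add, dotProduct_neg]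
  have hbL : ∀ i : Fin (r+1),
      (L * K + 1).mulVec (e i t) + L.mulVec (e' i t)
        = @HAdd.hAdd (Fin n → ℝ) (Fin n → ℝ) (Fin n → ℝ) instHAdd (e i t)
            (L.mulVec ((F i t).mulVec (Δ t))) := by
    intro i
    rw [hode' i]
    simp only [Matrix.add_mulVec, Matrix.mulVec_add, Matrix.mulVec_neg,
      Matrix.one_mulVec, Matrix.mulVec_mulVec]
    abel
  have hD : (Δ t : Fin m → ℝ) ⬝ᵥ (Δ' t : Fin m → ℝ)
      = -(∑ i : Fin (r+1),
          ((e i t : Fin n → ℝ) ⬝ᵥ (F i t).mulVec (Δ t)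
            + (F i t).mulVec (Δ t) ⬝ᵥ L.mulVec ((F i t).mulVec (Δ t)))) := by
    rw [hadapt', dotProduct_neg, dot_sum_aux]
    congr 1
    refine Finset.sum_congr rfl fun i _ => ?_
    rw [hbL i, Matrix.dotProduct_mulVec, Matrix.vecMul_transpose, dotProduct_add,
      dotProduct_comm ((F i t).mulVec (Δ t)) (e i t : Fin n → ℝ)]
  have hG : (Δ t : Fin m → ℝ) ⬝ᵥ (∑ i : Fin (r+1), (F i t)ᵀ * Lᵀ * F i t).mulVec (Δ t)
      = ∑ i : Fin (r+1),
          (F i t).mulVec (Δ t) ⬝ᵥ L.mulVec ((F i t).mulVec (Δ t)) := by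
    rw [sum_mulVec_aux, dot_sum_aux]
    refine Finset.sum_congr rfl fun i _ => ?_
    rw [← Matrix.mulVec_mulVec, ← Matrix.mulVec_mulVec,
      Matrix.dotProduct_mulVec, Matrix.vecMul_transpose,
      Matrix.dotProduct_mulVec, Matrix.vecMul_transpose,
      dotProduct_comm (L.mulVec ((F i t).mulVec (Δ t))) ((F i t).mulVec (Δ t))]
  have collapse : (1/2:ℝ) * (∑ i : Fin (r+1),
        ((e i t : Fin n → ℝ) ⬝ᵥ (e' i t : Fin n → ℝ)
          + (e' i t : Fin n → ℝ) ⬝ᵥ (e i t : Fin n → ℝ)))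
      + (1/2:ℝ) * ((Δ t : Fin m → ℝ) ⬝ᵥ (Δ' t : Fin m → ℝ)
          + (Δ' t : Fin m → ℝ) ⬝ᵥ (Δ t : Fin m → ℝ))
      = (∑ i : Fin (r+1), (e i t : Fin n → ℝ) ⬝ᵥ (e' i t : Fin n → ℝ))
          + (Δ t : Fin m → ℝ) ⬝ᵥ (Δ' t : Fin m → ℝ) := by
    have h : ∀ i : Fin (r+1),
        (e i t : Fin n → ℝ) ⬝ᵥ (e' i t : Fin n → ℝ)
          + (e' i t : Fin n → ℝ) ⬝ᵥ (e i t : Fin n → ℝ)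
        = 2 * ((e i t : Fin n → ℝ) ⬝ᵥ (e' i t : Fin n → ℝ)) := fun i => by
      rw [dotProduct_comm ((e' i t : Fin n → ℝ))]; ring
    rw [Finset.sum_congr rfl fun i _ => h i, ← Finset.mul_sum,
      dotProduct_comm ((Δ' t : Fin m → ℝ))]
    ring
  rw [collapse, Finset.sum_congr rfl fun i _ => hterm i, hD, hG, Finset.sum_add_distrib]
  simp only [Finset.sum_add_distrib, Finset.sum_neg_distrib]
  ring
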